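/- Let 2 ≤ m ≤ r and let M be a binary r×m matrix of rank m whose first row is the zero vector. Then there exists a vector a ∈ F_2^r with a_1 = 1 and wt(a) ≤ m such that wt(aM) = 1. -/

import Mathlib

open Matrix

/-- Hamming weight of a binary vector. -/
def wt {n : ℕ} (v : Fin n → ZMod 2) : ℕ :=
  (Finset.univ.filter (fun j => v j ≠ 0)).card

theorem stmt_11 (r m : ℕ) (hm : 2 ≤ m) (hr : m ≤ r) (M : Matrix (Fin r) (Fin m) (ZMod 2))
    (hrank : M.rank = m) (hrow : M ⟨0, by omega⟩ = 0) :
    ∃ a : Fin r → ZMod 2, a ⟨0, by omega⟩ = (1 : ZMod 2) ∧ wt a ≤ m ∧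
      wt (Matrix.vecMul a M) = 1 := by
  classical
  -- rows of M span F_2^m
  have hspan : Submodule.span (ZMod 2) (Set.range M) = ⊤ := by
    apply Submodule.eq_top_of_finrank_eq
    rw [← show Set.range M.row = Set.range M from rfl, ← Matrix.rank_eq_finrank_span_row, hrank]
    simp [Module.finrank_pi]
  -- extract a linearly independent spanning subset s
  obtain ⟨s, hs_sub, hs_span, hs_li⟩ := exists_linearIndependent (ZMod 2) (Set.range M)
  rw [hspan] at hs_span
  haveI : Finite s := Subtype.finite
  haveI : Fintype s := Fintype.ofFinite s
  -- basis from s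
  let b : Module.Basis s (ZMod 2) (Fin m → ZMod 2) := Module.Basis.mk hs_li (by rw [Subtype.range_coe_subtype, Set.setOf_mem_eq, hs_span])
  have hcard : Fintype.card s = m := by
    have := Module.finrank_eq_card_basis b
    simp [Module.finrank_pi] at this
    rw [← Nat.card_eq_fintype_card, Nat.card_coe_set_eq]
    omega
  -- standard basis vectors
  set e : Fin m → (Fin m → ZMod 2) := fun j => Pi.single j 1 with he
  -- each e j is a sum of a subset of s
  have hrep : ∀ j : Fin m, e j = ∑ v ∈ (b.repr (e j)).support, (v : Fin m → ZMod 2) := by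
    intro j
    conv_lhs => rw [← b.linearCombination_repr (e j)]
    rw [Finsupp.linearCombination_apply, Finsupp.sum]
    refine Finset.sum_congr rfl ?_
    intro v hv
    have h1 : b.repr (e j) v = 1 := by
      have h2 := Finsupp.mem_support_iff.mp hv
      revert h2; generalize b.repr (e j) v = x
      revert x; decide
    rw [h1, one_smul]
    simp [b, Module.Basis.mk_apply]
  -- find j whose representation is a proper subset
  have hkey : ∃ j : Fin m, (b.repr (e j)).support ≠ Finset.univ := by
    by_contra h
    push_neg at h
    have h0 := hrep ⟨0, by omega⟩
    have h1 := hrep ⟨1, by omega⟩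
    rw [h ⟨0, by omega⟩] at h0
    rw [h ⟨1, by omega⟩] at h1
    have : e ⟨0, by omega⟩ = e ⟨1, by omega⟩ := by rw [h0, h1]
    have := congrFun this ⟨0, by omega⟩
    simp [he, Pi.single_apply, Fin.ext_iff] at this
  obtain ⟨j, hj⟩ := hkey
  set t : Finset s := (b.repr (e j)).support with ht
  have htcard : t.card ≤ m - 1 := by
    have h1 : t.card < Fintype.card s := by
      rcases Finset.exists_of_ssubset (Finset.ssubset_univ_iff.mpr hj) with ⟨x, _, _⟩
      exact Finset.card_lt_card (Finset.ssubset_univ_iff.mpr hj) |>.trans_le (by simp)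
    omega
  -- choose row indices for elements of s
  have hchoice : ∀ v : s, ∃ i : Fin r, M i = (v : Fin m → ZMod 2) := fun v => hs_sub v.2
  choose idx hidx using hchoice
  have hinj : Function.Injective idx := by
    intro v w hvw
    have : (v : Fin m → ZMod 2) = w := by rw [← hidx v, ← hidx w, hvw]
    exact Subtype.ext this
  set z : Fin r := ⟨0, by omega⟩ with hz
  have hzidx : ∀ v : s, idx v ≠ z := by
    intro v hv
    have h0 : (v : Fin m → ZMod 2) ≠ 0 := hs_li.ne_zero v
    rw [← hidx v, hv, hz] at h0
    exact h0 hrow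
  set T : Finset (Fin r) := insert z (t.image idx) with hT
  refine ⟨fun i => if i ∈ T then 1 else 0, by simp [hT], ?_, ?_⟩
  · -- weight bound
    have : (Finset.univ.filter (fun i : Fin r => (if i ∈ T then (1:ZMod 2) else 0) ≠ 0)) = T := by
      ext i
      by_cases hi : i ∈ T <;> simp [hi]
    rw [wt, this, hT]
    calc (insert z (t.image idx)).card ≤ (t.image idx).card + 1 := Finset.card_insert_le _ _
      _ ≤ t.card + 1 := by gcongr; exact Finset.card_image_le
      _ ≤ m := by omega
  · -- weight of the image is 1
    have hsum : Matrix.vecMul (fun i => if i ∈ T then (1:ZMod 2) else 0) M = e j := by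
      have h1 : Matrix.vecMul (fun i => if i ∈ T then (1:ZMod 2) else 0) M
          = ∑ i ∈ T, M i := by
        funext k
        rw [Matrix.vecMul, dotProduct]
        erw [Finset.sum_apply]
        rw [← Finset.sum_filter_of_ne (p := fun i => i ∈ T)
          (f := fun i => (if i ∈ T then (1:ZMod 2) else 0) * M i k) ?_]
        · rw [Finset.sum_congr rfl]
          · congr 1
            ext i
            simp
          · intro i hi
            simp only [Finset.mem_filter] at hi
            simp [hi.2]
        · intro i _ h
          by_contra hc
          simp [hc] at h
      rw [h1, hT]
      erw [Finset.sum_insert]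
      · rw [hz, hrow, zero_add]
        erw [Finset.sum_image (fun v _ w _ h => hinj h)]
        rw [hrep j]
        exact Finset.sum_congr rfl (fun v _ => hidx v)
      · intro hmem
        obtain ⟨v, -, hv⟩ := Finset.mem_image.mp hmem
        exact hzidx v hv
    rw [hsum, wt]
    have : (Finset.univ.filter (fun k : Fin m => e j k ≠ 0)) = {j} := by
      ext k
      by_cases hk : k = j
      · subst hk; simp [he]
      · simp [he, hk, Pi.single_eq_of_ne hk]
    rw [this, Finset.card_singleton]
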